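/- With the trajectory setup, let G : {0,…,F} → ℝⁿ and let P_t be n × m real matrices for 0 ≤ t < F. Suppose G_F = 0 and for all 0 ≤ t < F both: (i) G_t = ∇_x r(x_t, a_t) + P_t ∇_a r(x_t, a_t) + γ (D_x f(x_t, a_t))ᵀ G_{t+1} + γ P_t (D_a f(x_t, a_t))ᵀ G_{t+1}, and (ii) P_t ( ∇_a r(x_t, a_t) + γ (D_a f(x_t, a_t))ᵀ G_{t+1} ) = 0. Then for all 0 ≤ t ≤ F, G_t = ∇R_t(x_t), the gradient of the reward-to-go function at the trajectory state x_t. -/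

import Mathlib

open Matrix

/-- Gradient of a scalar function on `ℝⁿ`, as a vector of partial derivatives. -/
noncomputable def grad {k : ℕ} (g : (Fin k → ℝ) → ℝ) (x : Fin k → ℝ) : Fin k → ℝ :=
  fun i => fderiv ℝ g x (Pi.single i 1)

/-- Gradient of `r` in the state variable. -/
noncomputable def gradX {n m : ℕ} (r : (Fin n → ℝ) × (Fin m → ℝ) → ℝ)
    (x : Fin n → ℝ) (a : Fin m → ℝ) : Fin n → ℝ :=
  fun i => fderiv ℝ (fun y => r (y, a)) x (Pi.single i 1)

/-- Gradient of `r` in the action variable. -/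
noncomputable def gradA {n m : ℕ} (r : (Fin n → ℝ) × (Fin m → ℝ) → ℝ)
    (x : Fin n → ℝ) (a : Fin m → ℝ) : Fin m → ℝ :=
  fun i => fderiv ℝ (fun b => r (x, b)) a (Pi.single i 1)

/-- Jacobian of `f` in the state variable (rows indexed by output components). -/
noncomputable def jacX {n m : ℕ} (f : (Fin n → ℝ) × (Fin m → ℝ) → Fin n → ℝ)
    (x : Fin n → ℝ) (a : Fin m → ℝ) : Matrix (Fin n) (Fin n) ℝ :=
  Matrix.of fun j i => fderiv ℝ (fun y => f (y, a) j) x (Pi.single i 1)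

/-- Jacobian of `f` in the action variable (rows indexed by output components). -/
noncomputable def jacA {n m : ℕ} (f : (Fin n → ℝ) × (Fin m → ℝ) → Fin n → ℝ)
    (x : Fin n → ℝ) (a : Fin m → ℝ) : Matrix (Fin n) (Fin m) ℝ :=
  Matrix.of fun j i => fderiv ℝ (fun b => f (x, b) j) a (Pi.single i 1)

lemma clm_sum {k : ℕ} (L : (Fin k → ℝ) →L[ℝ] ℝ) (u : Fin k → ℝ) :
    L u = ∑ i, u i * L (Pi.single i 1) := by
  conv_lhs => rw [← Finset.univ_sum_single u]
  rw [map_sum]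
  congr 1; ext i
  rw [← smul_eq_mul, ← _root_.map_smul]
  congr 1
  ext j
  by_cases h : j = i <;> simp [Pi.single_apply, h]

lemma grad_comp {n : ℕ} (g : (Fin n → ℝ) → (Fin n → ℝ)) (h : (Fin n → ℝ) → ℝ)
    (x : Fin n → ℝ) (hg : DifferentiableAt ℝ g x) (hh : DifferentiableAt ℝ h (g x)) (i : Fin n) :
    fderiv ℝ (fun y => h (g y)) x (Pi.single i 1)
      = ∑ j, fderiv ℝ (fun y => g y j) x (Pi.single i 1) * fderiv ℝ h (g x) (Pi.single j 1) := by
  have hc : fderiv ℝ (fun y => h (g y)) x = (fderiv ℝ h (g x)).comp (fderiv ℝ g x) :=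
    fderiv_comp x hh hg
  rw [hc]
  simp only [ContinuousLinearMap.coe_comp', Function.comp_apply]
  rw [clm_sum (fderiv ℝ h (g x)) (fderiv ℝ g x (Pi.single i 1))]
  refine Finset.sum_congr rfl fun j _ => ?_
  congr 2
  have hgj : ∀ j, DifferentiableAt ℝ (fun y => g y j) x := fun j =>
    ((ContinuousLinearMap.proj j : (Fin n → ℝ) →L[ℝ] ℝ).differentiableAt).comp x hg
  have : fderiv ℝ g x = ContinuousLinearMap.pi fun j => fderiv ℝ (fun y => g y j) x :=
    fderiv_pi hgj
  rw [this]; rfl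

theorem stmt5 {n m : ℕ} (F : ℕ) (hF : 1 ≤ F) (γ : ℝ)
    (f : (Fin n → ℝ) × (Fin m → ℝ) → Fin n → ℝ)
    (r : (Fin n → ℝ) × (Fin m → ℝ) → ℝ)
    (hf : ContDiff ℝ 1 f) (hr : ContDiff ℝ 1 r)
    (x₀ : Fin n → ℝ) (a : ℕ → Fin m → ℝ)
    (x : ℕ → Fin n → ℝ) (hx0 : x 0 = x₀)
    (hx : ∀ t < F, x (t + 1) = f (x t, a t))
    (R : ℕ → (Fin n → ℝ) → ℝ)
    (hRF : ∀ y, R F y = 0)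
    (hRrec : ∀ t < F, ∀ y, R t y = r (y, a t) + γ * R (t + 1) (f (y, a t)))
    (G : ℕ → Fin n → ℝ) (P : ℕ → Matrix (Fin n) (Fin m) ℝ)
    (hGF : G F = 0)
    (hGrec : ∀ t < F, G t =
      gradX r (x t) (a t) + (P t).mulVec (gradA r (x t) (a t)) +
        γ • (jacX f (x t) (a t))ᵀ.mulVec (G (t + 1)) +
        γ • (P t).mulVec ((jacA f (x t) (a t))ᵀ.mulVec (G (t + 1))))
    (hPzero : ∀ t < F, (P t).mulVec
      (gradA r (x t) (a t) + γ • (jacA f (x t) (a t))ᵀ.mulVec (G (t + 1))) = 0) :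
    ∀ t ≤ F, G t = grad (R t) (x t) := by
  have hrd : Differentiable ℝ r := hr.differentiable one_ne_zero
  have hfd : Differentiable ℝ f := hf.differentiable one_ne_zero
  -- differentiability of partial applications
  have hrx : ∀ (b : Fin m → ℝ), Differentiable ℝ (fun y => r (y, b)) := fun b =>
    hrd.comp (differentiable_id.prodMk (differentiable_const b))
  have hfx : ∀ (b : Fin m → ℝ), Differentiable ℝ (fun y => f (y, b)) := fun b =>
    hfd.comp (differentiable_id.prodMk (differentiable_const b))
  -- differentiability of reward-to-go
  have hRdiff : ∀ d t, t + d = F → Differentiable ℝ (R t) := by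
    intro d
    induction d with
    | zero =>
      intro t ht
      have htF : t = F := by omega
      have hR0 : R F = fun _ => (0 : ℝ) := funext hRF
      rw [htF, hR0]; exact differentiable_const 0
    | succ d ih =>
      intro t ht
      have htF : t < F := by omega
      have hR' := ih (t + 1) (by omega)
      have : R t = fun y => r (y, a t) + γ * R (t + 1) (f (y, a t)) := funext (hRrec t htF)
      rw [this]
      exact (hrx (a t)).add ((hR'.comp (hfx (a t))).const_mul γ)
  have key : ∀ d t, t + d = F → G t = grad (R t) (x t) := by
    intro d
    induction d with
    | zero =>
      intro t ht
      have htF : t = F := by omega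
      have hR0 : R F = fun _ => (0 : ℝ) := funext hRF
      rw [htF, hGF, hR0]
      funext i
      simp [grad]
    | succ d ih =>
      intro t ht
      have htF : t < F := by omega
      have hIH : G (t + 1) = grad (R (t + 1)) (x (t + 1)) := ih (t + 1) (by omega)
      -- step 1: simplify G t using greedy identity
      have h2 : (P t).mulVec (gradA r (x t) (a t)) +
          γ • (P t).mulVec ((jacA f (x t) (a t))ᵀ.mulVec (G (t + 1))) = 0 := by
        have h := hPzero t htF
        rwa [mulVec_add, mulVec_smul] at h
      have hG' : G t = gradX r (x t) (a t) +
          γ • (jacX f (x t) (a t))ᵀ.mulVec (G (t + 1)) := by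
        rw [hGrec t htF]
        calc gradX r (x t) (a t) + (P t).mulVec (gradA r (x t) (a t)) +
              γ • (jacX f (x t) (a t))ᵀ.mulVec (G (t + 1)) +
              γ • (P t).mulVec ((jacA f (x t) (a t))ᵀ.mulVec (G (t + 1)))
            = (gradX r (x t) (a t) + γ • (jacX f (x t) (a t))ᵀ.mulVec (G (t + 1))) +
              ((P t).mulVec (gradA r (x t) (a t)) +
               γ • (P t).mulVec ((jacA f (x t) (a t))ᵀ.mulVec (G (t + 1)))) := by abel
          _ = _ := by rw [h2, add_zero]
      -- step 2: compute grad (R t) (x t)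
      have hRt : R t = fun y => r (y, a t) + γ * R (t + 1) (f (y, a t)) := funext (hRrec t htF)
      have hR' : Differentiable ℝ (R (t + 1)) := hRdiff d (t + 1) (by omega)
      have hgrad : grad (R t) (x t) = gradX r (x t) (a t) +
          γ • (jacX f (x t) (a t))ᵀ.mulVec (grad (R (t + 1)) (x (t + 1))) := by
        funext i
        have hd1 : DifferentiableAt ℝ (fun y => r (y, a t)) (x t) := hrx (a t) (x t)
        have hd2 : DifferentiableAt ℝ (fun y => R (t + 1) (f (y, a t))) (x t) :=
          (hR' (f (x t, a t))).comp (x t) (hfx (a t) (x t))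
        have : fderiv ℝ (R t) (x t) =
            fderiv ℝ (fun y => r (y, a t) + γ * R (t + 1) (f (y, a t))) (x t) := by rw [hRt]
        rw [grad, this, fderiv_fun_add hd1 (hd2.const_mul γ), fderiv_const_mul hd2 γ]
        simp only [ContinuousLinearMap.add_apply, ContinuousLinearMap.coe_smul',
          Pi.smul_apply, smul_eq_mul]
        rw [grad_comp (fun y => f (y, a t)) (R (t + 1)) (x t) (hfx (a t) (x t))
          (hR' (f (x t, a t))) i]
        rw [hx t htF]
        simp [grad, gradX, jacX, mulVec, dotProduct, Finset.mul_sum, mul_comm]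
      rw [hG', hIH, hgrad]
  intro t ht
  exact key (F - t) t (by omega)
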